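/- Let D⋆ be a global minimizer of J̃ over K, set H⋆ = C − (1/2)[[A,D⋆],A], and let μ₁ ≤ ⋯ ≤ μ_M be the eigenvalues of H⋆ counted with multiplicity. If μ_m < μ_{m+1}, then P⋆ := 1_{(−∞,μ_m]}(H⋆) is the unique global minimizer of J̃ over K, P⋆ belongs to Gr(m,ℝ^M), and P⋆ is the unique global minimizer of J over Gr(m,ℝ^M). -/

import Mathlib

open Matrix Filter Topology

noncomputable section

/-- Commutator of matrices. -/
def commut {M : ℕ} (X Y : Matrix (Fin M) (Fin M) ℝ) : Matrix (Fin M) (Fin M) ℝ :=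
  X * Y - Y * X

/-- The Grassmann manifold `Gr(m, ℝ^M)`. -/
def Gr (M m : ℕ) (P : Matrix (Fin M) (Fin M) ℝ) : Prop :=
  P.IsSymm ∧ P * P = P ∧ P.trace = (m : ℝ)

/-- `K = CH(Gr(m,ℝ^M))`: symmetric `D` with `0 ⪯ D ⪯ I` and `Tr D = m`. -/
def Kset (M m : ℕ) (D : Matrix (Fin M) (Fin M) ℝ) : Prop :=
  D.PosSemidef ∧ (1 - D).PosSemidef ∧ D.trace = (m : ℝ)

/-- The cost function `J(P) = Tr(BP) - (1/2) Tr(APAP)`. -/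
def Jfun {M : ℕ} (A B P : Matrix (Fin M) (Fin M) ℝ) : ℝ :=
  (B * P).trace - (1 / 2) * (A * P * A * P).trace

/-- Squared Frobenius norm `‖X‖² = Tr(Xᵀ X)`. -/
def fnormSq {M : ℕ} (X : Matrix (Fin M) (Fin M) ℝ) : ℝ := (Xᵀ * X).trace

/-- The convexified functional `J̃(D) = Tr(CD) + (1/4)‖[A,D]‖²` with `C = B − (1/2)A²`. -/
def Jt {M : ℕ} (A B D : Matrix (Fin M) (Fin M) ℝ) : ℝ :=
  ((B - (1 / 2 : ℝ) • (A * A)) * D).trace + (1 / 4) * fnormSq (commut A D)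

/-- `μ` is the non-decreasing enumeration of the eigenvalues of `S`, with multiplicity. -/
def sortedEigs {M : ℕ} (S : Matrix (Fin M) (Fin M) ℝ) (μ : Fin M → ℝ) : Prop :=
  Monotone μ ∧ ∃ U : Matrix (Fin M) (Fin M) ℝ, U * Uᵀ = 1 ∧ S = U * Matrix.diagonal μ * Uᵀ

/-- `P = 1_{(-∞,t]}(S)`: the orthogonal projector onto the sum of the eigenspaces of the
symmetric matrix `S` associated with eigenvalues `≤ t`. -/
def IsSpectralProjLE {M : ℕ} (S : Matrix (Fin M) (Fin M) ℝ) (t : ℝ)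
    (P : Matrix (Fin M) (Fin M) ℝ) : Prop :=
  P.IsSymm ∧ P * P = P ∧ S * P = P * S ∧
  (∀ v : Fin M → ℝ, P.mulVec v = v → S.mulVec v ⬝ᵥ v ≤ t * (v ⬝ᵥ v)) ∧
  (∀ v : Fin M → ℝ, v ≠ 0 → P.mulVec v = 0 → t * (v ⬝ᵥ v) < S.mulVec v ⬝ᵥ v)

lemma fnormSq_nonneg {M : ℕ} (X : Matrix (Fin M) (Fin M) ℝ) : 0 ≤ fnormSq X := by
  unfold fnormSq
  rw [Matrix.trace]
  refine Finset.sum_nonneg fun j _ => ?_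
  simp only [Matrix.diag_apply, Matrix.mul_apply, Matrix.transpose_apply]
  exact Finset.sum_nonneg fun i _ => mul_self_nonneg _

lemma fnormSq_smul {M : ℕ} (c : ℝ) (X : Matrix (Fin M) (Fin M) ℝ) :
    fnormSq (c • X) = c^2 * fnormSq X := by
  unfold fnormSq
  rw [Matrix.transpose_smul, Matrix.smul_mul, Matrix.mul_smul, smul_smul, Matrix.trace_smul]
  simp [sq, smul_eq_mul]

lemma commut_smul {M : ℕ} (A : Matrix (Fin M) (Fin M) ℝ) (c : ℝ) (X : Matrix (Fin M) (Fin M) ℝ) :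
    commut A (c • X) = c • commut A X := by
  unfold commut
  rw [Matrix.mul_smul, Matrix.smul_mul, smul_sub]

lemma fnormSq_commut {M : ℕ} (A X : Matrix (Fin M) (Fin M) ℝ) (hA : Aᵀ = A) (hX : Xᵀ = X) :
    fnormSq (commut A X) = 2*((A*(A*(X*X))).trace) - 2*((A*(X*(A*X))).trace) := by
  unfold fnormSq commut
  rw [Matrix.transpose_sub, Matrix.transpose_mul, Matrix.transpose_mul, hA, hX]
  have expand : (X * A - A * X) * (A * X - X * A)
      = X*(A*(A*X)) - X*(A*(X*A)) - A*(X*(A*X)) + A*(X*(X*A)) := by noncomm_ring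
  rw [expand]
  rw [Matrix.trace_add, Matrix.trace_sub, Matrix.trace_sub]
  have c1 : (X*(A*(A*X))).trace = (A*(A*(X*X))).trace := by
    rw [Matrix.trace_mul_comm]; simp only [Matrix.mul_assoc]
  have c2 : (X*(A*(X*A))).trace = (A*(X*(A*X))).trace := by
    rw [Matrix.trace_mul_comm]; simp only [Matrix.mul_assoc]
  have c3 : (A*(X*(X*A))).trace = (A*(A*(X*X))).trace := by
    rw [Matrix.trace_mul_comm]; simp only [Matrix.mul_assoc]
    rw [Matrix.trace_mul_comm]; simp only [Matrix.mul_assoc]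
    exact c1
  rw [c1, c2, c3]; ring

lemma key_id {M : ℕ} (A B D1 D2 : Matrix (Fin M) (Fin M) ℝ) (hA : Aᵀ=A) (h1 : D1ᵀ=D1) (h2 : D2ᵀ=D2) :
  Jt A B D2 = Jt A B D1
    + ((((B - (1/2:ℝ)•(A*A)) - (1/2:ℝ)•commut (commut A D1) A) * (D2 - D1)).trace)
    + (1/4) * fnormSq (commut A (D2 - D1)) := by
  have h12 : (D2 - D1)ᵀ = D2 - D1 := by rw [Matrix.transpose_sub, h1, h2]
  rw [Jt, Jt, fnormSq_commut A D2 hA h2, fnormSq_commut A D1 hA h1,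
    fnormSq_commut A (D2-D1) hA h12]
  simp only [commut, sub_mul, mul_sub, smul_mul_assoc, mul_smul_comm, Matrix.trace_sub,
    Matrix.trace_add, Matrix.trace_smul, smul_eq_mul, Matrix.mul_assoc]
  have e1 : (D1*(A*(A*D2))).trace = (A*(A*(D2*D1))).trace := by
    rw [Matrix.trace_mul_comm]; simp only [Matrix.mul_assoc]
  have e3 : (D1*(A*(A*D1))).trace = (A*(A*(D1*D1))).trace := by
    rw [Matrix.trace_mul_comm]; simp only [Matrix.mul_assoc]
  have e4 : (A*(D2*(A*D1))).trace = (A*(D1*(A*D2))).trace := by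
    rw [Matrix.trace_mul_comm]; simp only [Matrix.mul_assoc]
    rw [Matrix.trace_mul_comm]; simp only [Matrix.mul_assoc]
  have e2 : (A*(A*(D2*D1))).trace = (A*(A*(D1*D2))).trace := by
    calc (A*(A*(D2*D1))).trace = ((A*(A*(D2*D1)))ᵀ).trace := (Matrix.trace_transpose _).symm
      _ = (D1*(D2*(A*A))).trace := by
          simp only [Matrix.transpose_mul, hA, h1, h2, Matrix.mul_assoc]
      _ = (A*(A*(D1*D2))).trace := by
          rw [Matrix.trace_mul_comm]; simp only [Matrix.mul_assoc]
          rw [Matrix.trace_mul_comm]; simp only [Matrix.mul_assoc]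
  linarith

lemma esum {M m : ℕ} (hmM : m ≤ M) :
    (∑ i : Fin M, (if (i:ℕ) < m then (1:ℝ) else 0)) = m := by
  rw [Fin.sum_univ_eq_sum_range (fun i => if i < m then (1:ℝ) else 0) M]
  rw [← Finset.sum_filter]
  have : (Finset.range M).filter (fun i => i < m) = Finset.range m := by
    ext x; simp only [Finset.mem_filter, Finset.mem_range]; omega
  rw [this]
  simp

lemma psd_row_zero {M : ℕ} {S : Matrix (Fin M) (Fin M) ℝ} (hS : S.PosSemidef)
    (i : Fin M) (hii : S i i = 0) (j : Fin M) : S i j = 0 := by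
  by_cases hij : i = j
  · rw [← hij]; exact hii
  have hsym : S j i = S i j := by
    have h := hS.1
    rw [Matrix.IsHermitian] at h
    have h2 := congrFun (congrFun h i) j
    simpa [Matrix.conjTranspose_apply] using h2
  have q : ∀ t : ℝ, 0 ≤ 2 * S i j * t + S j j := by
    intro t
    set x : Fin M → ℝ := fun k => t * ((Pi.single i (1:ℝ) : Fin M → ℝ) k) + (Pi.single j (1:ℝ) : Fin M → ℝ) k with hx
    have h := hS.dotProduct_mulVec_nonneg x
    have hxv : x = t • ((Pi.single i (1:ℝ)) : Fin M → ℝ) + ((Pi.single j (1:ℝ)) : Fin M → ℝ) := by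
      funext k; simp [hx]
    rw [hxv] at h
    simp only [star_trivial, Matrix.mulVec_add, Matrix.mulVec_smul, Matrix.mulVec_single,
      dotProduct_add, add_dotProduct, smul_dotProduct, dotProduct_smul,
      dotProduct, Pi.add_apply, Pi.smul_apply, smul_eq_mul, mul_one,
      MulOpposite.op_one, one_smul, Matrix.col_apply] at h
    have hsum : ∀ (g : Fin M → ℝ) (k : Fin M),
        ∑ x, (Pi.single k (1:ℝ) : Fin M → ℝ) x * g x = g k := by
      intro g k
      rw [Finset.sum_eq_single k]
      · simp
      · intro b _ hb; simp [Pi.single_apply, hb]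
      · intro hk; exact absurd (Finset.mem_univ k) hk
    have expand : ∀ x : Fin M, (t * (Pi.single i (1:ℝ) : Fin M → ℝ) x
          + (Pi.single j (1:ℝ) : Fin M → ℝ) x) * (t * S x i + S x j)
        = (Pi.single i (1:ℝ) : Fin M → ℝ) x * (t*(t*S x i + S x j))
          + (Pi.single j (1:ℝ) : Fin M → ℝ) x * (t * S x i + S x j) := by
      intro x; ring
    rw [Finset.sum_congr rfl (fun x _ => expand x), Finset.sum_add_distrib, hsum, hsum] at h
    rw [hii, hsym] at h
    nlinarith [h]
  by_contra hne
  have hq := q (-(S j j + 1) / (2 * S i j))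
  have h2 : (2 : ℝ) * S i j ≠ 0 := by
    intro h; apply hne; linarith
  rw [mul_div_cancel₀ _ h2] at hq
  linarith

lemma lp_bound {M m : ℕ} (hm1 : 1 ≤ m) (hmM : m < M) (μ : Fin M → ℝ) (hmono : Monotone μ)
    (d : Fin M → ℝ) (h0 : ∀ i, 0 ≤ d i) (h1 : ∀ i, d i ≤ 1)
    (hs : ∑ i, d i = (m:ℝ)) :
    (∑ i, μ i * (if (i:ℕ) < m then (1:ℝ) else 0)) ≤ ∑ i, μ i * d i ∧
    (μ ⟨m-1, by omega⟩ < μ ⟨m, hmM⟩ →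
      ∑ i, μ i * d i = ∑ i, μ i * (if (i:ℕ) < m then (1:ℝ) else 0) →
      ∀ i, d i = if (i:ℕ) < m then 1 else 0) := by
  set t := μ ⟨m-1, by omega⟩ with ht
  set e : Fin M → ℝ := fun i => if (i:ℕ) < m then (1:ℝ) else 0 with he
  have hesum : ∑ i, e i = (m:ℝ) := esum hmM.le
  have hmule : ∀ i : Fin M, (i:ℕ) < m → μ i ≤ t := by
    intro i hi; exact hmono (by rw [Fin.le_def]; simp; omega)
  have hmuge : ∀ i : Fin M, m ≤ (i:ℕ) → t ≤ μ i := by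
    intro i hi; exact hmono (by rw [Fin.le_def]; simp; omega)
  have hmugem : ∀ i : Fin M, m ≤ (i:ℕ) → μ ⟨m, hmM⟩ ≤ μ i := by
    intro i hi; exact hmono (by rw [Fin.le_def]; simp [hi])
  have nonneg : ∀ i : Fin M, 0 ≤ (μ i - t)*(d i - e i) := by
    intro i
    rcases lt_or_ge (i:ℕ) m with h | h
    · have h2 : e i = 1 := by simp [he, h]
      rw [h2]
      nlinarith [hmule i h, h1 i]
    · have h2 : e i = 0 := by simp [he]; omega
      rw [h2]
      exact mul_nonneg (by linarith [hmuge i h]) (by linarith [h0 i])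
  have expand : ∑ i, (μ i - t)*(d i - e i)
      = (∑ i, μ i * d i) - (∑ i, μ i * e i) - t*((∑ i, d i) - ∑ i, e i) := by
    simp only [sub_mul, mul_sub, Finset.sum_sub_distrib, ← Finset.mul_sum]
    ring
  have hzero : (∑ i, d i) - ∑ i, e i = 0 := by rw [hs, hesum]; ring
  have key : ∑ i, (μ i - t)*(d i - e i) = (∑ i, μ i * d i) - (∑ i, μ i * e i) := by
    rw [expand, hzero]; ring
  have hle : (∑ i, μ i * e i) ≤ ∑ i, μ i * d i := by
    have h5 : (0:ℝ) ≤ ∑ i : Fin M, (μ i - t) * (d i - e i) :=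
      Finset.sum_nonneg (fun i _ => nonneg i)
    rw [key] at h5; linarith
  refine ⟨hle, ?_⟩
  intro hgap heq
  have hzero2 : ∑ i, (μ i - t)*(d i - e i) = 0 := by rw [key, heq]; ring
  have hterm : ∀ i : Fin M, (μ i - t)*(d i - e i) = 0 := by
    intro i
    have := (Finset.sum_eq_zero_iff_of_nonneg (fun i _ => nonneg i)).mp hzero2
    exact this i (Finset.mem_univ i)
  have hdge : ∀ i : Fin M, m ≤ (i:ℕ) → d i = 0 := by
    intro i hi
    have h2 : e i = 0 := by simp [he]; omega
    have := hterm i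
    rw [h2, sub_zero] at this
    rcases mul_eq_zero.mp this with h | h
    · exfalso
      have := hmugem i hi
      have h3 := hmuge i hi
      have : t < μ i := lt_of_lt_of_le hgap (hmugem i hi)
      linarith
    · exact h
  have heds : ∀ i : Fin M, e i * d i = d i := by
    intro i
    rcases lt_or_ge (i:ℕ) m with h | h
    · simp [he, h]
    · rw [hdge i h]; ring
  have hsum_ed : ∑ i, e i * d i = (m:ℝ) := by
    rw [Finset.sum_congr rfl (fun i _ => heds i)]; exact hs
  have hsum_e1d : ∑ i, e i * (1 - d i) = 0 := by
    have : ∀ i : Fin M, e i * (1 - d i) = e i - e i * d i := by intro i; ring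
    rw [Finset.sum_congr rfl (fun i _ => this i), Finset.sum_sub_distrib, hesum, hsum_ed]
    ring
  have he_nonneg : ∀ i : Fin M, 0 ≤ e i := by
    intro i; simp only [he]; split <;> norm_num
  have hterm2 : ∀ i : Fin M, e i * (1 - d i) = 0 := by
    intro i
    have := (Finset.sum_eq_zero_iff_of_nonneg
      (fun i _ => mul_nonneg (he_nonneg i) (by linarith [h1 i]))).mp hsum_e1d
    exact this i (Finset.mem_univ i)
  intro i
  rcases lt_or_ge (i:ℕ) m with h | h
  · have h2 : e i = 1 := by simp [he, h]
    have := hterm2 i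
    rw [h2, one_mul, sub_eq_zero] at this
    simp [h, ← this]
  · rw [hdge i h, if_neg (by omega)]

lemma dotU {M : ℕ} {U : Matrix (Fin M) (Fin M) ℝ} (hUtU : Uᵀ * U = 1) (x y : Fin M → ℝ) :
    (U *ᵥ x) ⬝ᵥ (U *ᵥ y) = x ⬝ᵥ y := by
  rw [dotProduct_mulVec, ← vecMul_transpose, vecMul_vecMul, hUtU, vecMul_one]

lemma Uinj {M : ℕ} {U : Matrix (Fin M) (Fin M) ℝ} (hUtU : Uᵀ * U = 1) {w : Fin M → ℝ}
    (h : U *ᵥ w = 0) : w = 0 := by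
  have h2 : w ⬝ᵥ w = 0 := by rw [← dotU hUtU w w, h]; simp
  exact dotProduct_self_eq_zero.mp h2

lemma dot_self_nonneg {M : ℕ} (w : Fin M → ℝ) : 0 ≤ w ⬝ᵥ w :=
  Finset.sum_nonneg fun i _ => mul_self_nonneg _

lemma spectral_proj_eq {M m : ℕ} (hm1 : 1 ≤ m) (hmM : m < M)
    (μ : Fin M → ℝ) (hmono : Monotone μ)
    (U : Matrix (Fin M) (Fin M) ℝ) (hU : U * Uᵀ = 1)
    (Hstar : Matrix (Fin M) (Fin M) ℝ) (hHU : Hstar = U * Matrix.diagonal μ * Uᵀ)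
    (hgap : μ ⟨m-1, by omega⟩ < μ ⟨m, hmM⟩)
    (Pstar : Matrix (Fin M) (Fin M) ℝ)
    (hPstar : IsSpectralProjLE Hstar (μ ⟨m-1, by omega⟩) Pstar) :
    Uᵀ * Pstar * U = Matrix.diagonal (fun i : Fin M => if (i:ℕ) < m then (1:ℝ) else 0) := by
  obtain ⟨hPsym, hPidem, hPcomm, hPle, hPgt⟩ := hPstar
  have hUtU : Uᵀ * U = 1 := mul_eq_one_comm.mp hU
  set t := μ ⟨m-1, by omega⟩ with htdef
  set P' : Matrix (Fin M) (Fin M) ℝ := Uᵀ * Pstar * U with hP'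
  have sand : ∀ X : Matrix (Fin M) (Fin M) ℝ, Uᵀ * (U * X * Uᵀ) * U = X := by
    intro X
    simp only [Matrix.mul_assoc]
    rw [hUtU, mul_one, ← Matrix.mul_assoc, hUtU, one_mul]
  have sand' : ∀ X : Matrix (Fin M) (Fin M) ℝ, U * (Uᵀ * X * U) * Uᵀ = X := by
    intro X
    simp only [Matrix.mul_assoc]
    rw [hU, mul_one, ← Matrix.mul_assoc, hU, one_mul]
  have hPQ : Pstar = U * P' * Uᵀ := (sand' Pstar).symm
  -- idempotence of P'
  have hP'idem : P' * P' = P' := by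
    rw [hP']
    calc Uᵀ * Pstar * U * (Uᵀ * Pstar * U) = Uᵀ * (Pstar * (U * Uᵀ) * Pstar) * U := by
          simp only [Matrix.mul_assoc]
      _ = Uᵀ * Pstar * U := by rw [hU, mul_one, hPidem, Matrix.mul_assoc]
  -- commutation with diagonal
  have hcommD : Matrix.diagonal μ * P' = P' * Matrix.diagonal μ := by
    have hdiag : Matrix.diagonal μ = Uᵀ * Hstar * U := by rw [hHU, sand]
    rw [hdiag, hP']
    calc Uᵀ * Hstar * U * (Uᵀ * Pstar * U) = Uᵀ * (Hstar * (U * Uᵀ) * Pstar) * U := by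
          simp only [Matrix.mul_assoc]
      _ = Uᵀ * (Hstar * Pstar) * U := by rw [hU, mul_one]
      _ = Uᵀ * (Pstar * Hstar) * U := by rw [hPcomm]
      _ = Uᵀ * (Pstar * (U * Uᵀ) * Hstar) * U := by rw [hU, mul_one]
      _ = Uᵀ * Pstar * U * (Uᵀ * Hstar * U) := by simp only [Matrix.mul_assoc]
  have hblock : ∀ i j : Fin M, μ i ≠ μ j → P' i j = 0 := by
    intro i j hne
    have h := congrFun (congrFun hcommD i) j
    rw [Matrix.diagonal_mul, Matrix.mul_diagonal] at h
    have h2 : P' i j * (μ i - μ j) = 0 := by linear_combination h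
    rcases mul_eq_zero.mp h2 with h3 | h3
    · exact h3
    · exact absurd (sub_eq_zero.mp h3) hne
  have hmule : ∀ i : Fin M, (i:ℕ) < m → μ i ≤ t := by
    intro i hi; exact hmono (by rw [Fin.le_def]; simp; omega)
  have hmugem : ∀ i : Fin M, m ≤ (i:ℕ) → μ ⟨m, hmM⟩ ≤ μ i := by
    intro i hi; exact hmono (by rw [Fin.le_def]; simp [hi])
  have hblock1 : ∀ i j : Fin M, (i:ℕ) < m → m ≤ (j:ℕ) → P' i j = 0 := by
    intro i j hi hj
    exact hblock i j (ne_of_lt (lt_of_le_of_lt (hmule i hi)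
      (lt_of_lt_of_le hgap (hmugem j hj))))
  have hblock2 : ∀ i j : Fin M, (j:ℕ) < m → m ≤ (i:ℕ) → P' i j = 0 := by
    intro i j hj hi
    exact hblock i j (ne_of_gt (lt_of_le_of_lt (hmule j hj)
      (lt_of_lt_of_le hgap (hmugem i hi))))
  have hPvmul : ∀ w : Fin M → ℝ, Pstar *ᵥ (U *ᵥ w) = U *ᵥ (P' *ᵥ w) := by
    intro w
    have hPU : Pstar * U = U * P' := by
      rw [hPQ]; simp only [Matrix.mul_assoc]; rw [hUtU, mul_one]
    rw [mulVec_mulVec, mulVec_mulVec, hPU]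
  have hquad : ∀ w : Fin M → ℝ,
      (Hstar *ᵥ (U *ᵥ w)) ⬝ᵥ (U *ᵥ w) = ∑ i, μ i * (w i * w i) := by
    intro w
    have hHv : Hstar *ᵥ (U *ᵥ w) = U *ᵥ (Matrix.diagonal μ *ᵥ w) := by
      rw [mulVec_mulVec, mulVec_mulVec]
      congr 1
      rw [hHU]; simp only [Matrix.mul_assoc]; rw [hUtU, mul_one]
    rw [hHv, dotU hUtU, dotProduct]
    apply Finset.sum_congr rfl
    intro i _
    rw [Matrix.mulVec_diagonal]; ring
  have hcol2 : ∀ j : Fin M, m ≤ (j:ℕ) → ∀ i, P' i j = 0 := by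
    intro j hj
    by_contra hcon
    push_neg at hcon
    obtain ⟨i0, hi0⟩ := hcon
    set w : Fin M → ℝ := fun i => P' i j with hw
    have hfix : P' *ᵥ w = w := by
      have hw2 : w = P' *ᵥ (Pi.single j 1) := by
        funext i; rw [Matrix.mulVec_single]; simp [hw]
      rw [hw2, mulVec_mulVec, hP'idem]
    have hwne : w ≠ 0 := by
      intro h0; exact hi0 (congrFun h0 i0)
    have hfixv : Pstar *ᵥ (U *ᵥ w) = U *ᵥ w := by rw [hPvmul, hfix]
    have hle := hPle (U *ᵥ w) hfixv
    rw [hquad, dotU hUtU] at hle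
    have hlb : μ ⟨m, hmM⟩ * (w ⬝ᵥ w) ≤ ∑ i, μ i * (w i * w i) := by
      rw [dotProduct, Finset.mul_sum]
      apply Finset.sum_le_sum
      intro i _
      rcases lt_or_ge (i:ℕ) m with h | h
      · have hwi : w i = 0 := hblock1 i j h hj
        rw [hwi]; simp
      · exact mul_le_mul_of_nonneg_right (hmugem i h) (mul_self_nonneg _)
    have hpos : 0 < w ⬝ᵥ w := by
      rcases (dot_self_nonneg w).eq_or_lt with h | h
      · exact absurd (dotProduct_self_eq_zero.mp h.symm) hwne
      · exact h
    nlinarith [hgap]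
  have hcol1 : ∀ j : Fin M, (j:ℕ) < m → ∀ i,
      P' i j = (Pi.single j (1:ℝ) : Fin M → ℝ) i := by
    intro j hj
    by_contra hcon
    push_neg at hcon
    obtain ⟨i0, hi0⟩ := hcon
    set w : Fin M → ℝ := fun i => (Pi.single j (1:ℝ) : Fin M → ℝ) i - P' i j with hw
    have hker : P' *ᵥ w = 0 := by
      have hw2 : w = Pi.single j 1 - P' *ᵥ (Pi.single j 1) := by
        funext i; rw [Pi.sub_apply, Matrix.mulVec_single]; simp [hw]
      rw [hw2, Matrix.mulVec_sub, mulVec_mulVec, hP'idem, sub_self]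
    have hwne : w ≠ 0 := by
      intro h0
      apply hi0
      have := congrFun h0 i0
      rw [hw] at this
      simp only [Pi.zero_apply] at this
      linarith [this]
    have hvne : U *ᵥ w ≠ 0 := fun h => hwne (Uinj hUtU h)
    have hz : Pstar *ᵥ (U *ᵥ w) = 0 := by rw [hPvmul, hker, Matrix.mulVec_zero]
    have hgt := hPgt (U *ᵥ w) hvne hz
    rw [hquad, dotU hUtU] at hgt
    have hub : ∑ i, μ i * (w i * w i) ≤ t * (w ⬝ᵥ w) := by
      rw [dotProduct, Finset.mul_sum]
      apply Finset.sum_le_sum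
      intro i _
      rcases lt_or_ge (i:ℕ) m with h | h
      · exact mul_le_mul_of_nonneg_right (hmule i h) (mul_self_nonneg _)
      · have hwi : w i = 0 := by
          rw [hw]
          simp only
          rw [hblock2 i j hj h, Pi.single_apply, if_neg (by intro hh; rw [hh] at h; omega)]
          ring
        rw [hwi]; simp
    linarith
  ext i j
  rw [Matrix.diagonal_apply]
  rcases lt_or_ge (j:ℕ) m with h | h
  · rw [hcol1 j h i, Pi.single_apply]
    by_cases hij : i = j
    · subst hij; simp [h]
    · simp [hij]
  · rw [hcol2 j h i]
    by_cases hij : i = j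
    · subst hij; rw [if_pos rfl, if_neg (by omega)]
    · rw [if_neg hij]

lemma psd_diag_nonneg {M : ℕ} {S : Matrix (Fin M) (Fin M) ℝ} (hS : S.PosSemidef)
    (i : Fin M) : 0 ≤ S i i := by
  have h := hS.dotProduct_mulVec_nonneg (Pi.single i 1)
  simpa [Matrix.mulVec_single, dotProduct, Pi.single_apply, Finset.sum_ite_eq] using h

lemma psd_smul {M : ℕ} {S : Matrix (Fin M) (Fin M) ℝ} (hS : S.PosSemidef)
    {c : ℝ} (hc : 0 ≤ c) : (c • S).PosSemidef := by
  refine Matrix.PosSemidef.of_dotProduct_mulVec_nonneg ?_ ?_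
  · rw [Matrix.IsHermitian, Matrix.conjTranspose_smul]
    rw [hS.1]
    simp
  · intro x
    have h := hS.dotProduct_mulVec_nonneg x
    have h2 : (c • S) *ᵥ x = c • (S *ᵥ x) := by
      funext i
      simp [Matrix.mulVec, dotProduct, Finset.mul_sum, mul_assoc]
    rw [h2, dotProduct_smul, smul_eq_mul]
    exact mul_nonneg hc h

lemma psd_symm {M : ℕ} {S : Matrix (Fin M) (Fin M) ℝ} (hS : S.PosSemidef) : Sᵀ = S := by
  have h := hS.1
  rw [Matrix.IsHermitian, Matrix.conjTranspose_eq_transpose_of_trivial] at h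
  exact h

lemma trace_diag_conj {M : ℕ} (μ : Fin M → ℝ) (U X : Matrix (Fin M) (Fin M) ℝ) :
    ((U * Matrix.diagonal μ * Uᵀ) * X).trace = ∑ i, μ i * (Uᵀ * X * U) i i := by
  have h1 : (U * Matrix.diagonal μ * Uᵀ) * X = U * (Matrix.diagonal μ * (Uᵀ * X)) := by
    simp only [Matrix.mul_assoc]
  rw [h1, Matrix.trace_mul_comm]
  have h2 : Matrix.diagonal μ * (Uᵀ * X) * U = Matrix.diagonal μ * (Uᵀ * X * U) := by
    simp only [Matrix.mul_assoc]
  rw [h2, Matrix.trace]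
  apply Finset.sum_congr rfl
  intro i _
  simp [Matrix.diag_apply, Matrix.diagonal_mul]


lemma Gr_Kset {M m : ℕ} (P : Matrix (Fin M) (Fin M) ℝ) (hP : Gr M m P) : Kset M m P := by
  obtain ⟨hsym, hidem, htr⟩ := hP
  rw [Matrix.IsSymm] at hsym
  refine ⟨?_, ?_, htr⟩
  · have h : P = Pᴴ * P := by
      rw [Matrix.conjTranspose_eq_transpose_of_trivial, hsym]
      conv_lhs => rw [← hidem]
    rw [h]; exact Matrix.posSemidef_conjTranspose_mul_self P
  · have hsym1 : (1 - P)ᵀ = 1 - P := by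
      rw [Matrix.transpose_sub, Matrix.transpose_one, hsym]
    have hidem1 : (1 - P) * (1 - P) = 1 - P := by
      have h : (1 - P) * (1 - P) = 1 - P - P + P * P := by noncomm_ring
      rw [h, hidem]; abel
    have h : 1 - P = (1 - P)ᴴ * (1 - P) := by
      rw [Matrix.conjTranspose_eq_transpose_of_trivial, hsym1]
      conv_lhs => rw [← hidem1]
    rw [h]; exact Matrix.posSemidef_conjTranspose_mul_self (1 - P)

lemma Kset_conv {M m : ℕ} (D1 D2 : Matrix (Fin M) (Fin M) ℝ)
    (h1 : Kset M m D1) (h2 : Kset M m D2) {s : ℝ} (hs0 : 0 ≤ s) (hs1 : s ≤ 1) :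
    Kset M m ((1-s) • D1 + s • D2) := by
  refine ⟨Matrix.PosSemidef.add (psd_smul h1.1 (by linarith)) (psd_smul h2.1 hs0), ?_, ?_⟩
  · have h : 1 - ((1-s) • D1 + s • D2) = (1-s) • (1 - D1) + s • (1 - D2) := by
      have hone : ((1-s) : ℝ) • (1 : Matrix (Fin M) (Fin M) ℝ) + s • 1 = 1 := by
        rw [← add_smul]; norm_num
      calc 1 - ((1-s) • D1 + s • D2)
          = (((1-s) : ℝ) • (1 : Matrix (Fin M) (Fin M) ℝ) + s • 1) - ((1-s) • D1 + s • D2) := by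
            rw [hone]
        _ = (1-s) • (1 - D1) + s • (1 - D2) := by rw [smul_sub, smul_sub]; abel
    rw [h]
    exact Matrix.PosSemidef.add (psd_smul h1.2.1 (by linarith)) (psd_smul h2.2.1 hs0)
  · rw [Matrix.trace_add, Matrix.trace_smul, Matrix.trace_smul, h1.2.2, h2.2.2,
      smul_eq_mul, smul_eq_mul]
    ring

lemma Jt_eq_Jfun {M m : ℕ} (A B P : Matrix (Fin M) (Fin M) ℝ) (hA : Aᵀ = A)
    (hGr : Gr M m P) : Jt A B P = Jfun A B P := by
  obtain ⟨hsym, hidem, _⟩ := hGr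
  rw [Matrix.IsSymm] at hsym
  rw [Jt, Jfun, fnormSq_commut A P hA hsym, hidem]
  simp only [sub_mul, smul_mul_assoc, Matrix.trace_sub, Matrix.trace_smul, smul_eq_mul,
    Matrix.mul_assoc]
  ring


/-- let `D⋆` be a global minimizer of `J̃` over `K`,
`H⋆ = C − (1/2)[[A,D⋆],A]` with eigenvalues `μ₁ ≤ ⋯ ≤ μ_M`. If `μ_m < μ_{m+1}`, then
`P⋆ := 1_{(−∞,μ_m]}(H⋆)` is the unique global minimizer of `J̃` over `K`, belongs to
`Gr(m,ℝ^M)`, and is the unique global minimizer of `J` over `Gr(m,ℝ^M)`. -/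
theorem stmt_8 {M m : ℕ} (hM : 2 ≤ M) (hm1 : 1 ≤ m) (hm2 : m ≤ M - 1)
    (A B : Matrix (Fin M) (Fin M) ℝ) (hA : A.IsSymm) (hApsd : A.PosSemidef)
    (hB : B.IsSymm) (Dstar : Matrix (Fin M) (Fin M) ℝ) (hDstar : Kset M m Dstar)
    (hmin : ∀ D : Matrix (Fin M) (Fin M) ℝ, Kset M m D → Jt A B Dstar ≤ Jt A B D)
    (Hstar : Matrix (Fin M) (Fin M) ℝ)
    (hH : Hstar = (B - (1 / 2 : ℝ) • (A * A)) - (1 / 2 : ℝ) • commut (commut A Dstar) A)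
    (μ : Fin M → ℝ) (hμ : sortedEigs Hstar μ)
    (hgap : μ ⟨m - 1, by omega⟩ < μ ⟨m, by omega⟩)
    (Pstar : Matrix (Fin M) (Fin M) ℝ)
    (hPstar : IsSpectralProjLE Hstar (μ ⟨m - 1, by omega⟩) Pstar) :
    Kset M m Pstar ∧
      (∀ D : Matrix (Fin M) (Fin M) ℝ, Kset M m D → Jt A B Pstar ≤ Jt A B D) ∧
      (∀ D : Matrix (Fin M) (Fin M) ℝ, Kset M m D →
        (∀ D' : Matrix (Fin M) (Fin M) ℝ, Kset M m D' → Jt A B D ≤ Jt A B D') → D = Pstar) ∧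
      Gr M m Pstar ∧
      (∀ P : Matrix (Fin M) (Fin M) ℝ, Gr M m P → Jfun A B Pstar ≤ Jfun A B P) ∧
      (∀ P : Matrix (Fin M) (Fin M) ℝ, Gr M m P →
        (∀ P' : Matrix (Fin M) (Fin M) ℝ, Gr M m P' → Jfun A B P ≤ Jfun A B P') →
        P = Pstar) := by
  obtain ⟨hmono, U, hU, hHU⟩ := hμ
  have hmM : m < M := by omega
  have hUtU : Uᵀ * U = 1 := mul_eq_one_comm.mp hU
  have hAsym : Aᵀ = A := hA
  have hDsym : Dstarᵀ = Dstar := psd_symm hDstar.1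
  set t := μ ⟨m-1, by omega⟩ with htdef
  set e : Fin M → ℝ := fun i => if (i:ℕ) < m then (1:ℝ) else 0 with he
  set E : Matrix (Fin M) (Fin M) ℝ := Matrix.diagonal e with hE
  have sand' : ∀ X : Matrix (Fin M) (Fin M) ℝ, U * (Uᵀ * X * U) * Uᵀ = X := by
    intro X
    simp only [Matrix.mul_assoc]
    rw [hU, mul_one, ← Matrix.mul_assoc, hU, one_mul]
  have hP'E : Uᵀ * Pstar * U = E :=
    spectral_proj_eq hm1 hmM μ hmono U hU Hstar hHU hgap Pstar hPstar
  have hPUE : Pstar = U * E * Uᵀ := by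
    have h := sand' Pstar
    rw [hP'E] at h
    exact h.symm
  have hesum : ∑ i, e i = (m:ℝ) := esum (le_of_lt hmM)
  have htrP : Pstar.trace = (m:ℝ) := by
    rw [hPUE]
    have h1 : U * E * Uᵀ = U * (E * Uᵀ) := by rw [Matrix.mul_assoc]
    rw [h1, Matrix.trace_mul_comm, Matrix.mul_assoc, hUtU, mul_one, hE,
      Matrix.trace_diagonal, hesum]
  have hGrP : Gr M m Pstar := ⟨hPstar.1, hPstar.2.1, htrP⟩
  have hKsetP : Kset M m Pstar := Gr_Kset Pstar hGrP
  -- trace formula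
  have htraceH : ∀ X : Matrix (Fin M) (Fin M) ℝ,
      (Hstar * X).trace = ∑ i, μ i * (Uᵀ * X * U) i i := by
    intro X
    rw [hHU]
    exact trace_diag_conj μ U X
  have htrHP : (Hstar * Pstar).trace = ∑ i, μ i * e i := by
    rw [htraceH Pstar]
    apply Finset.sum_congr rfl
    intro i _
    rw [hP'E, hE, Matrix.diagonal_apply_eq]
  -- linear bound over K
  have hlin : ∀ D : Matrix (Fin M) (Fin M) ℝ, Kset M m D →
      (Hstar * Pstar).trace ≤ (Hstar * D).trace ∧
      ((Hstar * D).trace = (Hstar * Pstar).trace → D = Pstar) := by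
    intro D hD
    set D' : Matrix (Fin M) (Fin M) ℝ := Uᵀ * D * U with hD'
    have hD'psd : D'.PosSemidef := by
      have h := Matrix.PosSemidef.conjTranspose_mul_mul_same hD.1 U
      rwa [Matrix.conjTranspose_eq_transpose_of_trivial] at h
    have h1D' : 1 - D' = Uᵀ * (1 - D) * U := by
      rw [Matrix.mul_sub, Matrix.sub_mul, Matrix.mul_one, hUtU, hD']
    have h1D'psd : (1 - D').PosSemidef := by
      rw [h1D']
      have h := Matrix.PosSemidef.conjTranspose_mul_mul_same hD.2.1 U
      rwa [Matrix.conjTranspose_eq_transpose_of_trivial] at h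
    have hd0 : ∀ i, 0 ≤ D' i i := fun i => psd_diag_nonneg hD'psd i
    have hd1 : ∀ i, D' i i ≤ 1 := by
      intro i
      have h := psd_diag_nonneg h1D'psd i
      rw [Matrix.sub_apply, Matrix.one_apply_eq] at h
      linarith
    have hdtr : ∑ i, D' i i = (m:ℝ) := by
      have h1 : D'.trace = D.trace := by
        rw [hD', Matrix.trace_mul_comm, ← Matrix.mul_assoc, hU, one_mul]
      have h2 : D'.trace = ∑ i, D' i i := rfl
      rw [← h2, h1, hD.2.2]
    have lp := lp_bound hm1 hmM μ hmono (fun i => D' i i) hd0 hd1 hdtr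
    constructor
    · rw [htrHP, htraceH D]
      exact lp.1
    · intro heq
      have heq2 : ∑ i, μ i * D' i i = ∑ i, μ i * (if (i:ℕ) < m then (1:ℝ) else 0) := by
        rw [← htraceH D, heq, htrHP]
      have hdiageq0 := lp.2 hgap heq2
      have hdiageq : ∀ i : Fin M, D' i i = if (i:ℕ) < m then (1:ℝ) else 0 := hdiageq0
      have hrow0 : ∀ i : Fin M, m ≤ (i:ℕ) → ∀ j, D' i j = 0 := by
        intro i hi j
        exact psd_row_zero hD'psd i (by rw [hdiageq i, if_neg (by omega)]) j
      have hrow1 : ∀ i : Fin M, (i:ℕ) < m → ∀ j, (1 - D') i j = 0 := by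
        intro i hi j
        refine psd_row_zero h1D'psd i ?_ j
        rw [Matrix.sub_apply, Matrix.one_apply_eq, hdiageq i, if_pos hi]
        ring
      have hD'E : D' = E := by
        ext i j
        rw [hE, Matrix.diagonal_apply]
        rcases lt_or_ge (i:ℕ) m with h | h
        · have h2 := hrow1 i h j
          rw [Matrix.sub_apply, sub_eq_zero] at h2
          rw [← h2, Matrix.one_apply]
          by_cases hij : i = j
          · subst hij; rw [if_pos rfl, if_pos rfl, he]; simp [h]
          · rw [if_neg hij, if_neg hij]
        · rw [hrow0 i h j]
          by_cases hij : i = j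
          · subst hij
            rw [if_pos rfl]
            show (0:ℝ) = if (i:ℕ) < m then (1:ℝ) else 0
            rw [if_neg (by omega : ¬ (i:ℕ) < m)]
          · rw [if_neg hij]
      have h := sand' D
      rw [show Uᵀ * D * U = D' from rfl, hD'E] at h
      rw [← h, hPUE]
  -- gradient inequality
  have hgrad : ∀ D : Matrix (Fin M) (Fin M) ℝ, Kset M m D →
      0 ≤ (Hstar * (D - Dstar)).trace := by
    intro D hD
    have hDsym2 : Dᵀ = D := psd_symm hD.1
    set q := fnormSq (commut A (D - Dstar)) with hq
    have hqnn : 0 ≤ q := fnormSq_nonneg _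
    set a := (Hstar * (D - Dstar)).trace with ha
    by_contra hcon
    push_neg at hcon
    set s := min 1 ((-a)/(q+1)) with hs
    have hs0 : 0 < s := lt_min one_pos (div_pos (by linarith) (by linarith))
    have hs1 : s ≤ 1 := min_le_left _ _
    have hsq : s * (q+1) ≤ -a := by
      have h := min_le_right 1 ((-a)/(q+1))
      rw [← le_div_iff₀ (by linarith : (0:ℝ) < q+1)]
      exact h
    have hKt : Kset M m ((1-s) • Dstar + s • D) :=
      Kset_conv _ _ hDstar hD (le_of_lt hs0) hs1
    have hid := key_id A B Dstar ((1-s) • Dstar + s • D) hAsym hDsym (psd_symm hKt.1)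
    rw [← hH] at hid
    have hdiff : ((1-s) • Dstar + s • D) - Dstar = s • (D - Dstar) := by
      rw [sub_smul, one_smul, smul_sub]; abel
    rw [hdiff, commut_smul, fnormSq_smul, Matrix.mul_smul, Matrix.trace_smul] at hid
    have hmin2 := hmin _ hKt
    rw [hid] at hmin2
    rw [smul_eq_mul, ← ha, ← hq] at hmin2
    -- hmin2 : Jt Dstar ≤ Jt Dstar + s * a + 1/4 * (s^2 * q)
    have hsa : s * a < 0 := mul_neg_of_pos_of_neg hs0 hcon
    have hprod : s * (s * (q+1)) ≤ s * (-a) :=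
      mul_le_mul_of_nonneg_left hsq (le_of_lt hs0)
    nlinarith [hmin2, hsa, hprod, hs0, hqnn, sq_nonneg s]
  -- Dstar = Pstar
  have hsubtr : ∀ X Y : Matrix (Fin M) (Fin M) ℝ,
      (Hstar * (X - Y)).trace = (Hstar * X).trace - (Hstar * Y).trace := by
    intro X Y
    rw [Matrix.mul_sub, Matrix.trace_sub]
  have hDP : Dstar = Pstar := by
    have h1 := (hlin Dstar hDstar).1
    have h2 := hgrad Pstar hKsetP
    rw [hsubtr] at h2
    exact (hlin Dstar hDstar).2 (by linarith)
  -- min of Jt over K at Pstar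
  have hminP : ∀ D : Matrix (Fin M) (Fin M) ℝ, Kset M m D → Jt A B Pstar ≤ Jt A B D := by
    intro D hD
    rw [← hDP]
    exact hmin D hD
  -- uniqueness over K
  have huniqK : ∀ D : Matrix (Fin M) (Fin M) ℝ, Kset M m D →
      (∀ D' : Matrix (Fin M) (Fin M) ℝ, Kset M m D' → Jt A B D ≤ Jt A B D') → D = Pstar := by
    intro D hD hDmin
    have heq : Jt A B D = Jt A B Dstar :=
      le_antisymm (hDmin Dstar hDstar) (hmin D hD)
    have hid := key_id A B Dstar D hAsym hDsym (psd_symm hD.1)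
    rw [← hH] at hid
    have hqnn := fnormSq_nonneg (commut A (D - Pstar))
    rw [hsubtr] at hid
    have hge := (hlin D hD).1
    apply (hlin D hD).2
    rw [hDP] at hid
    -- hid : Jt D = Jt Dstar + (Tr HD - Tr HPstar) + 1/4 * fnormSq...; with Jt D = Jt Dstar
    have h0 : (Hstar * D).trace - (Hstar * Pstar).trace ≤ 0 := by
      have hJeq : Jt A B D = Jt A B Pstar := by rw [heq, hDP]
      rw [hJeq] at hid
      linarith
    linarith
  refine ⟨hKsetP, hminP, huniqK, hGrP, ?_, ?_⟩
  · intro P hP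
    rw [← Jt_eq_Jfun A B Pstar hAsym hGrP, ← Jt_eq_Jfun A B P hAsym hP]
    exact hminP P (Gr_Kset P hP)
  · intro P hP hPmin
    apply huniqK P (Gr_Kset P hP)
    intro D' hD'
    have h1 : Jfun A B P ≤ Jfun A B Pstar := hPmin Pstar hGrP
    rw [← Jt_eq_Jfun A B Pstar hAsym hGrP, ← Jt_eq_Jfun A B P hAsym hP] at h1
    exact le_trans h1 (hminP D' hD')
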